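/- A loop z_r(i_{[r]}; j_{[r]}) on S of degree r is df 1 (i.e., the rectangular index set I(i_{[r]}; j_{[r]}) contains no support of a loop on S of degree 2,…,r−1) if and only if I(i_{[r]}; j_{[r]}) contains exactly two elements of S in every one of its rows and columns. -/

import Mathlib

open scoped Fin.NatCast Fin.CommRing

lemma aux_cast_inj {r : ℕ} [NeZero r] {a b : ℕ} (ha : a < r) (hb : b < r)
    (h : (a : Fin r) = (b : Fin r)) : a = b := by
  have := congrArg Fin.val h
  simpa [Fin.val_natCast, Nat.mod_eq_of_lt ha, Nat.mod_eq_of_lt hb] using this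

lemma aux_one_ne_zero {r : ℕ} [NeZero r] (hr : 2 ≤ r) : (1 : Fin r) ≠ 0 := by
  intro h
  have := congrArg Fin.val h
  simp [Fin.val_one', Nat.mod_eq_of_lt hr] at this

lemma chord_loop {I J r : ℕ} [NeZero r] (hr : 2 ≤ r)
    (S : Finset (Fin I × Fin J)) (i : Fin r → Fin I) (j : Fin r → Fin J)
    (hi : Function.Injective i) (hj : Function.Injective j)
    (honS : ∀ k : Fin r, (i k, j k) ∈ S ∧ (i k, j (k + 1)) ∈ S)
    (k l : Fin r) (hS : (i k, j l) ∈ S) (h1 : k ≠ l) (h2 : l ≠ k + 1) :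
    ∃ (s : ℕ), s + 2 < r ∧
      ∃ (i' : Fin (s + 2) → Fin I) (j' : Fin (s + 2) → Fin J),
        Function.Injective i' ∧ Function.Injective j' ∧
        ∀ t : Fin (s + 2),
          (i' t, j' t) ∈ S ∧ (i' t, j' (t + 1)) ∈ S ∧
          (∃ k', i' t = i k') ∧ (∃ k', j' t = j k') := by
  set e : Fin r := k - l with he
  have hlek : l + e = k := by rw [he]; ring
  have he0 : e ≠ 0 := sub_ne_zero.mpr h1
  have hev0 : 1 ≤ e.val := Nat.one_le_iff_ne_zero.mpr (fun h => he0 (Fin.ext (by simp [h])))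
  have hone : (1 : Fin r).val = 1 := by rw [Fin.val_one', Nat.mod_eq_of_lt (by omega)]
  have hevr : e.val + 1 < r := by
    rcases Nat.lt_or_ge (e.val + 1) r with h | h
    · exact h
    · exfalso
      have hv : e.val = r - 1 := by have := e.isLt; omega
      have he1 : e + 1 = 0 := by
        apply Fin.ext
        rw [Fin.add_def, hone]
        simp only [Fin.val_zero]
        have : e.val + 1 = r := by omega
        rw [this, Nat.mod_self]
      have hkl : k + 1 = l := by rw [← hlek, add_assoc, he1, add_zero]
      exact h2 hkl.symm
  refine ⟨e.val - 1, by omega, fun t => i (l + (t.val : Fin r)), fun t => j (l + (t.val : Fin r)), ?_, ?_, ?_⟩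
  · intro t1 t2 h
    have := add_left_cancel (hi h)
    exact Fin.ext (aux_cast_inj (by have := t1.isLt; omega) (by have := t2.isLt; omega) this)
  · intro t1 t2 h
    have := add_left_cancel (hj h)
    exact Fin.ext (aux_cast_inj (by have := t1.isLt; omega) (by have := t2.isLt; omega) this)
  · intro t
    have htlt : t.val < e.val - 1 + 2 := t.isLt
    have hone' : (1 : Fin (e.val - 1 + 2)).val = 1 := rfl
    have hv1 : ((t + 1 : Fin (e.val - 1 + 2))).val = (t.val + 1) % (e.val - 1 + 2) := by
      rw [Fin.add_def, hone']
    refine ⟨(honS (l + (t.val : Fin r))).1, ?_, ⟨_, rfl⟩, ⟨_, rfl⟩⟩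
    show (i (l + (t.val : Fin r)), j (l + (((t + 1 : Fin (e.val - 1 + 2))).val : Fin r))) ∈ S
    rcases Nat.lt_or_ge (t.val + 1) (e.val - 1 + 2) with hc | hc
    · have hv2 : ((t + 1 : Fin (e.val - 1 + 2))).val = t.val + 1 := by
        rw [hv1, Nat.mod_eq_of_lt hc]
      rw [hv2]
      have : ((t.val + 1 : ℕ) : Fin r) = (t.val : Fin r) + 1 := by push_cast; ring
      rw [this, ← add_assoc]
      exact (honS (l + (t.val : Fin r))).2
    · have hv : t.val = e.val := by omega
      have hv2 : ((t + 1 : Fin (e.val - 1 + 2))).val = 0 := by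
        rw [hv1]
        have : t.val + 1 = e.val - 1 + 2 := by omega
        rw [this, Nat.mod_self]
      rw [hv2]
      have hcast : ((t.val : ℕ) : Fin r) = e := by
        apply Fin.ext
        rw [Fin.val_natCast, Nat.mod_eq_of_lt (by omega : t.val < r), hv]
      simp only [Nat.cast_zero, add_zero]
      rw [hcast, hlek]
      exact hS

theorem stmt16 {I J r : ℕ} [NeZero r] (hr : 2 ≤ r)
    (S : Finset (Fin I × Fin J))
    (i : Fin r → Fin I) (j : Fin r → Fin J)
    (hi : Function.Injective i) (hj : Function.Injective j)
    -- the loop z_r(i_{[r]}; j_{[r]}) is a loop on S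
    (honS : ∀ k : Fin r, (i k, j k) ∈ S ∧ (i k, j (k + 1)) ∈ S) :
    -- df 1: the rectangle I(i_{[r]}; j_{[r]}) contains no support of a loop on S
    -- of degree 2,…,r−1
    (¬ ∃ (s : ℕ), s + 2 < r ∧
        ∃ (i' : Fin (s + 2) → Fin I) (j' : Fin (s + 2) → Fin J),
          Function.Injective i' ∧ Function.Injective j' ∧
          ∀ l : Fin (s + 2),
            (i' l, j' l) ∈ S ∧ (i' l, j' (l + 1)) ∈ S ∧
            (∃ k, i' l = i k) ∧ (∃ k, j' l = j k))
    ↔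
    ((∀ k : Fin r, (Finset.univ.filter (fun l : Fin r => (i k, j l) ∈ S)).card = 2) ∧
     (∀ l : Fin r, (Finset.univ.filter (fun k : Fin r => (i k, j l) ∈ S)).card = 2)) := by
  have hone : (1 : Fin r) ≠ 0 := aux_one_ne_zero hr
  constructor
  · intro hno
    constructor
    · intro k
      by_contra hcard
      have hsub : ({k, k + 1} : Finset (Fin r)) ⊆
          Finset.univ.filter (fun l => (i k, j l) ∈ S) := by
        intro x hx
        simp only [Finset.mem_insert, Finset.mem_singleton] at hx
        rcases hx with rfl | rfl
        · simp only [Finset.mem_filter, Finset.mem_univ, true_and]; exact (honS _).1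
        · simp only [Finset.mem_filter, Finset.mem_univ, true_and]; exact (honS _).2
      have hkne : k ≠ k + 1 := fun h => hone (add_eq_left.mp h.symm)
      have hpc : ({k, k + 1} : Finset (Fin r)).card = 2 := Finset.card_pair hkne
      have hss : ({k, k + 1} : Finset (Fin r)) ⊂ _ :=
        hsub.ssubset_of_ne (fun h => hcard (by rw [← h, hpc]))
      obtain ⟨l, hlmem, hlnot⟩ := Finset.exists_of_ssubset hss
      simp only [Finset.mem_filter, Finset.mem_univ, true_and] at hlmem
      simp only [Finset.mem_insert, Finset.mem_singleton, not_or] at hlnot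
      exact hno (chord_loop hr S i j hi hj honS k l hlmem (Ne.symm hlnot.1) hlnot.2)
    · intro l
      by_contra hcard
      have hmem2 : (i (l - 1), j l) ∈ S := by
        have := (honS (l - 1)).2
        rwa [sub_add_cancel] at this
      have hsub : ({l, l - 1} : Finset (Fin r)) ⊆
          Finset.univ.filter (fun k => (i k, j l) ∈ S) := by
        intro x hx
        simp only [Finset.mem_insert, Finset.mem_singleton] at hx
        rcases hx with rfl | rfl
        · simp only [Finset.mem_filter, Finset.mem_univ, true_and]; exact (honS _).1
        · simp only [Finset.mem_filter, Finset.mem_univ, true_and]; exact hmem2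
      have hlne : l ≠ l - 1 := fun h =>
        hone (left_eq_add.mp (sub_eq_iff_eq_add.mp h.symm))
      have hpc : ({l, l - 1} : Finset (Fin r)).card = 2 := Finset.card_pair hlne
      have hss : ({l, l - 1} : Finset (Fin r)) ⊂ _ :=
        hsub.ssubset_of_ne (fun h => hcard (by rw [← h, hpc]))
      obtain ⟨k, hkmem, hknot⟩ := Finset.exists_of_ssubset hss
      simp only [Finset.mem_filter, Finset.mem_univ, true_and] at hkmem
      simp only [Finset.mem_insert, Finset.mem_singleton, not_or] at hknot
      have hlk1 : l ≠ k + 1 := fun h => hknot.2 (eq_sub_iff_add_eq.mpr h.symm)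
      exact hno (chord_loop hr S i j hi hj honS k l hkmem hknot.1 hlk1)
  · rintro ⟨hrow, -⟩ ⟨s, hs, i', j', hi', hj', hloop⟩
    have hchar : ∀ a b : Fin r, (i a, j b) ∈ S → b = a ∨ b = a + 1 := by
      intro a c hab
      have hane : a ≠ a + 1 := fun h => hone (add_eq_left.mp h.symm)
      have hsub : ({a, a + 1} : Finset (Fin r)) ⊆
          Finset.univ.filter (fun l => (i a, j l) ∈ S) := by
        intro x hx
        simp only [Finset.mem_insert, Finset.mem_singleton] at hx
        rcases hx with rfl | rfl
        · simp only [Finset.mem_filter, Finset.mem_univ, true_and]; exact (honS _).1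
        · simp only [Finset.mem_filter, Finset.mem_univ, true_and]; exact (honS _).2
      have heq : ({a, a + 1} : Finset (Fin r)) =
          Finset.univ.filter (fun l => (i a, j l) ∈ S) :=
        Finset.eq_of_subset_of_card_le hsub
          (by rw [hrow a, Finset.card_pair hane])
      have hc : c ∈ ({a, a + 1} : Finset (Fin r)) := by
        rw [heq]
        simp only [Finset.mem_filter, Finset.mem_univ, true_and]
        exact hab
      simpa using hc
    choose a ha using fun l => (hloop l).2.2.1
    choose b hb using fun l => (hloop l).2.2.2
    have hainj : Function.Injective a := fun l1 l2 h => hi' (by rw [ha, ha, h])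
    have hbinj : Function.Injective b := fun l1 l2 h => hj' (by rw [hb, hb, h])
    have hmlt : s + 2 < r := hs
    have hfone : (1 : Fin (s + 2)) ≠ 0 := aux_one_ne_zero (by omega)
    have hlne : ∀ l : Fin (s + 2), l + 1 ≠ l := fun l h => hfone (add_eq_left.mp h)
    have hbl : ∀ l, b l = a l ∨ b l = a l + 1 := fun l =>
      hchar _ _ (by rw [← ha l, ← hb l]; exact (hloop l).1)
    have hbl1 : ∀ l, b (l + 1) = a l ∨ b (l + 1) = a l + 1 := fun l =>
      hchar _ _ (by rw [← ha l, ← hb (l + 1)]; exact (hloop l).2.1)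
    have hbne : ∀ l, b (l + 1) ≠ b l := fun l h => hlne l (hbinj h)
    have htwo : (1 : Fin r) + 1 ≠ 0 := by
      intro h
      have hv1 : (1 : Fin r).val = 1 := by
        rw [Fin.val_one', Nat.mod_eq_of_lt (by omega)]
      have hv : ((1 : Fin r) + 1).val = 0 := by rw [h]; rfl
      rw [Fin.val_add, hv1, Nat.mod_eq_of_lt (by omega : 1 + 1 < r)] at hv
      omega
    have hAB : ∀ l, (b (l + 1) = b l + 1 ∧ a l = b l) ∨
        (b l = b (l + 1) + 1 ∧ a l = b (l + 1)) := by
      intro l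
      rcases hbl l with h1 | h1 <;> rcases hbl1 l with h2 | h2
      · exact absurd (h2.trans h1.symm) (hbne l)
      · exact Or.inl ⟨by rw [h2, h1], h1.symm⟩
      · exact Or.inr ⟨by rw [h1, h2], h2.symm⟩
      · exact absurd (h2.trans h1.symm) (hbne l)
    have hAstep : ∀ l : Fin (s + 2), b (l + 1) = b l + 1 → b (l + 1 + 1) = b (l + 1) + 1 := by
      intro l h
      rcases hAB (l + 1) with ⟨h2, -⟩ | ⟨h1, h2⟩
      · exact h2
      · exfalso
        rcases hAB l with ⟨-, g2⟩ | ⟨g1, g2⟩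
        · apply hlne l
          apply hainj
          rw [h2, g2]
          have hcc : b (l + 1 + 1) + 1 = b l + 1 := by rw [← h1, h]
          exact add_right_cancel hcc
        · apply htwo
          have hcc : b l = b l + (1 + 1) := by rw [← add_assoc, ← h]; exact g1
          exact left_eq_add.mp hcc
    have hBstep : ∀ l : Fin (s + 2), b l = b (l + 1) + 1 → b (l + 1) = b (l + 1 + 1) + 1 := by
      intro l h
      rcases hAB (l + 1) with ⟨h1, h2⟩ | ⟨h1, -⟩
      · exfalso
        rcases hAB l with ⟨g1, g2⟩ | ⟨g1, g2⟩
        · apply htwo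
          have hcc : b (l + 1) = b (l + 1) + (1 + 1) := by rw [← add_assoc, ← h]; exact g1
          exact left_eq_add.mp hcc
        · exact hlne l (hainj (by rw [h2, g2]))
      · exact h1
    rcases hAB 0 with ⟨h0, -⟩ | ⟨h0, -⟩
    · have hall : ∀ l : Fin (s + 2), b (l + 1) = b l + 1 := by
        have hn : ∀ n : ℕ, b ((n : Fin (s + 2)) + 1) = b (n : Fin (s + 2)) + 1 := by
          intro n
          induction n with
          | zero => simpa using h0
          | succ n ih =>
            have e1 : ((n + 1 : ℕ) : Fin (s + 2)) = (n : Fin (s + 2)) + 1 := by push_cast; ring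
            rw [e1]
            exact hAstep _ ih
        intro l
        have := hn l.val
        rwa [Fin.cast_val_eq_self] at this
      have hit : ∀ n : ℕ, b ((n : Fin (s + 2))) = b 0 + (n : Fin r) := by
        intro n
        induction n with
        | zero => simp
        | succ n ih =>
          have e1 : ((n + 1 : ℕ) : Fin (s + 2)) = (n : Fin (s + 2)) + 1 := by push_cast; ring
          have e2 : ((n + 1 : ℕ) : Fin r) = (n : Fin r) + 1 := by push_cast; ring
          rw [e1, hall, ih, e2, add_assoc]
      have hfin := hit (s + 2)
      rw [Fin.natCast_self] at hfin
      have hz : ((s + 2 : ℕ) : Fin r) = 0 := left_eq_add.mp hfin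
      have hvz := congrArg Fin.val hz
      rw [Fin.val_natCast, Nat.mod_eq_of_lt hmlt, Fin.val_zero] at hvz
      omega
    · have hall : ∀ l : Fin (s + 2), b l = b (l + 1) + 1 := by
        have hn : ∀ n : ℕ, b (n : Fin (s + 2)) = b ((n : Fin (s + 2)) + 1) + 1 := by
          intro n
          induction n with
          | zero => simpa using h0
          | succ n ih =>
            have e1 : ((n + 1 : ℕ) : Fin (s + 2)) = (n : Fin (s + 2)) + 1 := by push_cast; ring
            rw [e1]
            exact hBstep _ ih
        intro l
        have := hn l.val
        rwa [Fin.cast_val_eq_self] at this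
      have hit : ∀ n : ℕ, b 0 = b ((n : Fin (s + 2))) + (n : Fin r) := by
        intro n
        induction n with
        | zero => simp
        | succ n ih =>
          have e1 : ((n + 1 : ℕ) : Fin (s + 2)) = (n : Fin (s + 2)) + 1 := by push_cast; ring
          have e2 : ((n + 1 : ℕ) : Fin r) = (n : Fin r) + 1 := by push_cast; ring
          rw [hall (n : Fin (s + 2))] at ih
          rw [e1, e2, ih]
          ring
      have hfin := hit (s + 2)
      rw [Fin.natCast_self] at hfin
      have hz : ((s + 2 : ℕ) : Fin r) = 0 := left_eq_add.mp hfin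
      have hvz := congrArg Fin.val hz
      rw [Fin.val_natCast, Nat.mod_eq_of_lt hmlt, Fin.val_zero] at hvz
      omega
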